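/- arXiv:math/0202069 — 4 statements merged into one kernel-verified Lean document; each statement's English description precedes it below -/
import Mathlib

section
/- Let D(x0,x1,x2,x3) = x0^2*x3^2 - 3*x1^2*x2^2 - 6*x0*x1*x2*x3 + 4*x0*x2^3 + 4*x3*x1^3 and let t be a parameter. Define y0 = x0*D^3, y1 = x1*D^3 + t*x0^5*D^2, y2 = x2*D^3 + 2*t*x1*x0^4*D^2 + t^2*x0^9*D, y3 = x3*D^3 + 3*t*x2*x0^4*D^2 + 3*t^2*x1*x0^8*D + t^3*x0^13. Then D(y0,y1,y2,y3) = D(x0,x1,x2,x3)^13. -/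
/-- Shift invariance (with weight) of the discriminant of the binary cubic:
substituting shifted coefficients multiplies the discriminant by `b ^ 6`. -/
theorem disc_shift_aux {R : Type*} [CommRing R] (x0 x1 x2 x3 a b : R) :
    x0 ^ 2 * (b^3*x3 + 3*a*b^2*x2 + 3*a^2*b*x1 + a^3*x0) ^ 2
      - 3 * (b*x1 + a*x0) ^ 2 * (b^2*x2 + 2*a*b*x1 + a^2*x0) ^ 2
      - 6 * x0 * (b*x1 + a*x0) * (b^2*x2 + 2*a*b*x1 + a^2*x0) *
          (b^3*x3 + 3*a*b^2*x2 + 3*a^2*b*x1 + a^3*x0)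
      + 4 * x0 * (b^2*x2 + 2*a*b*x1 + a^2*x0) ^ 3
      + 4 * (b^3*x3 + 3*a*b^2*x2 + 3*a^2*b*x1 + a^3*x0) * (b*x1 + a*x0) ^ 3
    = b ^ 6 * (x0 ^ 2 * x3 ^ 2 - 3 * x1 ^ 2 * x2 ^ 2 - 6 * x0 * x1 * x2 * x3 +
      4 * x0 * x2 ^ 3 + 4 * x3 * x1 ^ 3) := by
  ring

/-- The discriminant `D` of the binary cubic transforms under the degree-13 forms
`y0, y1, y2, y3` of the transformation `g_t` by `D(y0,y1,y2,y3) = D(x0,x1,x2,x3)^13`. -/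
theorem discriminant_of_transformed_forms
    {R : Type*} [CommRing R] (x0 x1 x2 x3 t : R) :
    let D := x0 ^ 2 * x3 ^ 2 - 3 * x1 ^ 2 * x2 ^ 2 - 6 * x0 * x1 * x2 * x3 +
      4 * x0 * x2 ^ 3 + 4 * x3 * x1 ^ 3
    let y0 := x0 * D ^ 3
    let y1 := x1 * D ^ 3 + t * x0 ^ 5 * D ^ 2
    let y2 := x2 * D ^ 3 + 2 * t * x1 * x0 ^ 4 * D ^ 2 + t ^ 2 * x0 ^ 9 * D
    let y3 := x3 * D ^ 3 + 3 * t * x2 * x0 ^ 4 * D ^ 2 + 3 * t ^ 2 * x1 * x0 ^ 8 * D +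
      t ^ 3 * x0 ^ 13
    y0 ^ 2 * y3 ^ 2 - 3 * y1 ^ 2 * y2 ^ 2 - 6 * y0 * y1 * y2 * y3 + 4 * y0 * y2 ^ 3 +
        4 * y3 * y1 ^ 3 = D ^ 13 := by
  intro D y0 y1 y2 y3
  have hD : D = x0 ^ 2 * x3 ^ 2 - 3 * x1 ^ 2 * x2 ^ 2 - 6 * x0 * x1 * x2 * x3 +
      4 * x0 * x2 ^ 3 + 4 * x3 * x1 ^ 3 := rfl
  have h0 : y0 = x0 * D ^ 3 := rfl
  have h1 : y1 = x1 * D ^ 3 + t * x0 ^ 5 * D ^ 2 := rfl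
  have h2 : y2 = x2 * D ^ 3 + 2 * t * x1 * x0 ^ 4 * D ^ 2 + t ^ 2 * x0 ^ 9 * D := rfl
  have h3 : y3 = x3 * D ^ 3 + 3 * t * x2 * x0 ^ 4 * D ^ 2 + 3 * t ^ 2 * x1 * x0 ^ 8 * D +
      t ^ 3 * x0 ^ 13 := rfl
  clear_value D y0 y1 y2 y3
  have h := disc_shift_aux x0 x1 x2 x3 (t * x0 ^ 4) D
  rw [h0, h1, h2, h3]
  linear_combination D ^ 6 * h - D ^ 12 * hD
end

section
/- With y0,y1,y2,y3 defined as the degree-13 forms of the transformation g_t (y0 = x0*D^3, y1 = x1*D^3 + t*x0^5*D^2, y2 = x2*D^3 + 2t*x1*x0^4*D^2 + t^2*x0^9*D, y3 = x3*D^3 + 3t*x2*x0^4*D^2 + 3t^2*x1*x0^8*D + t^3*x0^13), applying the transformation g_{-t} to (y0,y1,y2,y3) yields (f_{-t})_i(y0,y1,y2,y3) = x_i * D(x0,x1,x2,x3)^42 for each i = 0,1,2,3. -/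
/-- The discriminant of the binary cubic `x0*T0^3 + 3*x1*T0^2*T1 + 3*x2*T0*T1^2 + x3*T1^3`. -/
def Dq {R : Type*} [CommRing R] (x0 x1 x2 x3 : R) : R :=
  x0 ^ 2 * x3 ^ 2 - 3 * x1 ^ 2 * x2 ^ 2 - 6 * x0 * x1 * x2 * x3 + 4 * x0 * x2 ^ 3 +
    4 * x3 * x1 ^ 3

/-- The four degree-13 forms `(f_t)_0, (f_t)_1, (f_t)_2, (f_t)_3` of the Cremona
transformation `g_t`. -/
def fT {R : Type*} [CommRing R] (t x0 x1 x2 x3 : R) : Fin 4 → R :=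
  ![x0 * Dq x0 x1 x2 x3 ^ 3,
    x1 * Dq x0 x1 x2 x3 ^ 3 + t * x0 ^ 5 * Dq x0 x1 x2 x3 ^ 2,
    x2 * Dq x0 x1 x2 x3 ^ 3 + 2 * t * x1 * x0 ^ 4 * Dq x0 x1 x2 x3 ^ 2 +
      t ^ 2 * x0 ^ 9 * Dq x0 x1 x2 x3,
    x3 * Dq x0 x1 x2 x3 ^ 3 + 3 * t * x2 * x0 ^ 4 * Dq x0 x1 x2 x3 ^ 2 +
      3 * t ^ 2 * x1 * x0 ^ 8 * Dq x0 x1 x2 x3 + t ^ 3 * x0 ^ 13]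

/-- The discriminant of the transformed forms, with `D` a free variable,
equals `D^12` times the original discriminant. -/
lemma Dq_fT_free {R : Type*} [CommRing R] (x0 x1 x2 x3 t D : R) :
    Dq (x0 * D ^ 3) (x1 * D ^ 3 + t * x0 ^ 5 * D ^ 2)
      (x2 * D ^ 3 + 2 * t * x1 * x0 ^ 4 * D ^ 2 + t ^ 2 * x0 ^ 9 * D)
      (x3 * D ^ 3 + 3 * t * x2 * x0 ^ 4 * D ^ 2 + 3 * t ^ 2 * x1 * x0 ^ 8 * D +
        t ^ 3 * x0 ^ 13) = D ^ 12 * Dq x0 x1 x2 x3 := by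
  simp only [Dq]
  ring

/-- Substituting the forms of `g_t` into the forms of `g_{-t}` gives
`(f_{-t})_i((f_t)_0,…,(f_t)_3) = x_i * D^42`, so `g_{-t} ∘ g_t` is the identity. -/
theorem gt_inverse {R : Type*} [CommRing R] (x0 x1 x2 x3 t : R) :
    ∀ i : Fin 4,
      fT (-t) (fT t x0 x1 x2 x3 0) (fT t x0 x1 x2 x3 1) (fT t x0 x1 x2 x3 2)
          (fT t x0 x1 x2 x3 3) i =
        ![x0, x1, x2, x3] i * Dq x0 x1 x2 x3 ^ 42 := by
  have key := Dq_fT_free x0 x1 x2 x3 t (Dq x0 x1 x2 x3)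
  intro i
  fin_cases i <;>
    simp only [fT, Fin.mk_zero, Fin.mk_one, Fin.isValue, Matrix.cons_val_zero,
      Matrix.cons_val_one, Matrix.head_cons, Matrix.cons_val_two, Matrix.tail_cons,
      Matrix.cons_val_three, show (⟨2, by norm_num⟩ : Fin 4) = 2 from rfl,
      show (⟨3, by norm_num⟩ : Fin 4) = 3 from rfl] <;>
    rw [key] <;>
    generalize Dq x0 x1 x2 x3 = D <;>
    ring
end

section
/- Let k be a field and t ∈ k nonzero. A point (x0:x1:x2:x3) of P^3 over the algebraic closure of k is a common zero of the four forms (f_t)_0, (f_t)_1, (f_t)_2, (f_t)_3 if and only if x0 = 0 and D(x0,x1,x2,x3) = 0, i.e., x0 = 0 and x1^2*(4*x3*x1 - 3*x2^2) = 0. -/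
/-- For `t ≠ 0`, a point of `P^3` over the algebraic closure of `k` is a common zero of
the four forms `(f_t)_i` iff `x0 = 0` and `D = 0`, i.e. `x0 = 0` and
`x1^2*(4*x3*x1 - 3*x2^2) = 0`. -/
theorem fundamental_points {k : Type*} [Field k] (t : k) (ht : t ≠ 0)
    (x0 x1 x2 x3 : AlgebraicClosure k) (hx : ¬(x0 = 0 ∧ x1 = 0 ∧ x2 = 0 ∧ x3 = 0)) :
    (∀ i : Fin 4, fT (algebraMap k (AlgebraicClosure k) t) x0 x1 x2 x3 i = 0) ↔
      x0 = 0 ∧ Dq x0 x1 x2 x3 = 0 ∧ x1 ^ 2 * (4 * x3 * x1 - 3 * x2 ^ 2) = 0 := by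
  set s := algebraMap k (AlgebraicClosure k) t with hsdef
  have hs0 : s ≠ 0 := by
    simpa [hsdef] using (map_ne_zero (algebraMap k (AlgebraicClosure k))).mpr ht
  have key : x1 ^ 2 * (4 * x3 * x1 - 3 * x2 ^ 2) = Dq 0 x1 x2 x3 := by
    simp only [Dq]; ring
  constructor
  · intro h
    have h0 := h 0; have h1 := h 1; have h2 := h 2; have h3 := h 3
    simp only [fT, Matrix.cons_val_zero, Matrix.cons_val_one, Matrix.head_cons,
      Matrix.cons_val_two, Matrix.tail_cons, Matrix.cons_val_three] at h0 h1 h2 h3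
    have hD : Dq x0 x1 x2 x3 = 0 := by
      by_contra hD
      have hx0 : x0 = 0 := by
        rcases mul_eq_zero.mp h0 with h' | h'
        · exact h'
        · exact absurd h' (pow_ne_zero _ hD)
      subst hx0
      simp only [ne_eq, zero_pow, mul_zero, zero_mul, add_zero, zero_add,
        mul_eq_zero, pow_eq_zero_iff, OfNat.ofNat_ne_zero, not_false_eq_true] at h1 h2 h3 hD ⊢
      have hx1 : x1 = 0 := h1.resolve_right hD
      subst hx1
      have hx2 : x2 = 0 := h2.resolve_right hD
      subst hx2
      have hx3 : x3 = 0 := h3.resolve_right hD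
      exact hx ⟨rfl, rfl, rfl, hx3⟩
    rw [hD] at h3
    simp only [ne_eq, zero_pow, mul_zero, zero_mul, add_zero, zero_add,
      mul_eq_zero, pow_eq_zero_iff, OfNat.ofNat_ne_zero, not_false_eq_true] at h3
    have hx0 : x0 = 0 := h3.resolve_left hs0
    refine ⟨hx0, hD, ?_⟩
    exact key.trans (hx0 ▸ hD)
  · rintro ⟨hx0, hD, -⟩
    have hD0 : Dq 0 x1 x2 x3 = 0 := hx0 ▸ hD
    intro i
    fin_cases i <;> simp [fT, hx0, hD0]
end

section
/- For t ≠ 0, the multiplicity at Q = (0:0:0:1) of the form (f_t)_3 = x3*D^3 + 3t*x2*x0^4*D^2 + 3t^2*x1*x0^8*D + t^3*x0^13 equals the multiplicity of D^3 at Q, which is 6. In particular min_i mult_Q((f_t)_i) ≤ 6. -/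
open MvPolynomial in
/-- For `t ≠ 0`, in the affine chart `x3 = 1` at the origin `Q = (0:0:0:1)`, the form
`(f_t)_3 = x3*D^3 + 3t*x2*x0^4*D^2 + 3t^2*x1*x0^8*D + t^3*x0^13` has multiplicity
exactly `6` (that of `D^3`); in particular `min_i mult_Q((f_t)_i) ≤ 6`. -/
theorem multiplicity_of_f3_at_Q {k : Type*} [Field k] (t : k) (ht : t ≠ 0) :
    let Daff : MvPolynomial (Fin 3) k :=
      X 0 ^ 2 - 3 * X 1 ^ 2 * X 2 ^ 2 - 6 * X 0 * X 1 * X 2 + 4 * X 0 * X 2 ^ 3 +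
        4 * X 1 ^ 3
    let m : Ideal (MvPolynomial (Fin 3) k) := Ideal.span {X 0, X 1, X 2}
    let f : Fin 4 → MvPolynomial (Fin 3) k :=
      ![X 0 * Daff ^ 3,
        X 1 * Daff ^ 3 + C t * X 0 ^ 5 * Daff ^ 2,
        X 2 * Daff ^ 3 + 2 * C t * X 1 * X 0 ^ 4 * Daff ^ 2 + C t ^ 2 * X 0 ^ 9 * Daff,
        Daff ^ 3 + 3 * C t * X 2 * X 0 ^ 4 * Daff ^ 2 + 3 * C t ^ 2 * X 1 * X 0 ^ 8 * Daff +
          C t ^ 3 * X 0 ^ 13]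
    (f 3 ∈ m ^ 6 ∧ f 3 ∉ m ^ 7) ∧ (∃ i : Fin 4, f i ∉ m ^ 7) := by
  intro Daff m f
  have hf3 : f 3 = Daff ^ 3 + 3 * C t * X 2 * X 0 ^ 4 * Daff ^ 2 +
      3 * C t ^ 2 * X 1 * X 0 ^ 8 * Daff + C t ^ 3 * X 0 ^ 13 := rfl
  have hX0 : X 0 ∈ m := Ideal.subset_span (by simp)
  have hX1 : X 1 ∈ m := Ideal.subset_span (by simp)
  have hX2 : X 2 ∈ m := Ideal.subset_span (by simp)
  have hmul2 : ∀ a b : MvPolynomial (Fin 3) k, a ∈ m → b ∈ m → a * b ∈ m ^ 2 := by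
    intro a b ha hb
    rw [sq]
    exact Ideal.mul_mem_mul ha hb
  have hD : Daff ∈ m ^ 2 := by
    show X 0 ^ 2 - 3 * X 1 ^ 2 * X 2 ^ 2 - 6 * X 0 * X 1 * X 2 + 4 * X 0 * X 2 ^ 3 +
        4 * X 1 ^ 3 ∈ m ^ 2
    have h1 : X 0 ^ 2 ∈ m ^ 2 := Ideal.pow_mem_pow hX0 2
    have h2 : (3 : MvPolynomial (Fin 3) k) * X 1 ^ 2 * X 2 ^ 2 ∈ m ^ 2 := by
      have e : (3 : MvPolynomial (Fin 3) k) * X 1 ^ 2 * X 2 ^ 2 =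
          (3 * X 1 * X 2) * (X 1 * X 2) := by ring
      rw [e]
      exact Ideal.mul_mem_left _ _ (hmul2 _ _ hX1 hX2)
    have h3 : (6 : MvPolynomial (Fin 3) k) * X 0 * X 1 * X 2 ∈ m ^ 2 := by
      have e : (6 : MvPolynomial (Fin 3) k) * X 0 * X 1 * X 2 =
          (6 * X 0) * (X 1 * X 2) := by ring
      rw [e]
      exact Ideal.mul_mem_left _ _ (hmul2 _ _ hX1 hX2)
    have h4 : (4 : MvPolynomial (Fin 3) k) * X 0 * X 2 ^ 3 ∈ m ^ 2 := by
      have e : (4 : MvPolynomial (Fin 3) k) * X 0 * X 2 ^ 3 =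
          (4 * X 2 ^ 2) * (X 0 * X 2) := by ring
      rw [e]
      exact Ideal.mul_mem_left _ _ (hmul2 _ _ hX0 hX2)
    have h5 : (4 : MvPolynomial (Fin 3) k) * X 1 ^ 3 ∈ m ^ 2 := by
      have e : (4 : MvPolynomial (Fin 3) k) * X 1 ^ 3 = (4 * X 1) * (X 1 * X 1) := by ring
      rw [e]
      exact Ideal.mul_mem_left _ _ (hmul2 _ _ hX1 hX1)
    exact add_mem (add_mem (sub_mem (sub_mem h1 h2) h3) h4) h5
  -- membership in m ^ 6
  have hD3 : Daff ^ 3 ∈ m ^ 6 := by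
    have h := Ideal.pow_mem_pow hD 3
    rwa [← pow_mul] at h
  have hD2 : Daff ^ 2 ∈ m ^ 4 := by
    have h := Ideal.pow_mem_pow hD 2
    rwa [← pow_mul] at h
  have hT2 : 3 * C t * X 2 * X 0 ^ 4 * Daff ^ 2 ∈ m ^ 6 := by
    have e : 3 * C t * X 2 * X 0 ^ 4 * Daff ^ 2 =
        (3 * C t * X 2 * X 0 ^ 2) * (X 0 ^ 2 * Daff ^ 2) := by ring
    rw [e]
    refine Ideal.mul_mem_left _ _ ?_
    have h : X 0 ^ 2 * Daff ^ 2 ∈ m ^ 2 * m ^ 4 :=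
      Ideal.mul_mem_mul (Ideal.pow_mem_pow hX0 2) hD2
    rwa [← pow_add] at h
  have hT3 : 3 * C t ^ 2 * X 1 * X 0 ^ 8 * Daff ∈ m ^ 6 := by
    have e : 3 * C t ^ 2 * X 1 * X 0 ^ 8 * Daff =
        (3 * C t ^ 2 * X 1 * X 0 ^ 4) * (X 0 ^ 4 * Daff) := by ring
    rw [e]
    refine Ideal.mul_mem_left _ _ ?_
    have h : X 0 ^ 4 * Daff ∈ m ^ 4 * m ^ 2 :=
      Ideal.mul_mem_mul (Ideal.pow_mem_pow hX0 4) hD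
    rwa [← pow_add] at h
  have hT4 : C t ^ 3 * X 0 ^ 13 ∈ m ^ 6 := by
    have e : (C t ^ 3 * X 0 ^ 13 : MvPolynomial (Fin 3) k) =
        (C t ^ 3 * X 0 ^ 7) * X 0 ^ 6 := by ring
    rw [e]
    exact Ideal.mul_mem_left _ _ (Ideal.pow_mem_pow hX0 6)
  have hmem : f 3 ∈ m ^ 6 := by
    rw [hf3]
    exact add_mem (add_mem (add_mem hD3 hT2) hT3) hT4
  -- non-membership in m ^ 7
  have hnot : f 3 ∉ m ^ 7 := by
    intro hmem7
    set φ : MvPolynomial (Fin 3) k →ₐ[k] Polynomial k := aeval ![Polynomial.X, 0, 0] with hφ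
    have hφD : φ Daff = Polynomial.X ^ 2 := by
      show φ (X 0 ^ 2 - 3 * X 1 ^ 2 * X 2 ^ 2 - 6 * X 0 * X 1 * X 2 + 4 * X 0 * X 2 ^ 3 +
        4 * X 1 ^ 3) = Polynomial.X ^ 2
      simp [hφ]
    have hmaple : Ideal.map (φ : MvPolynomial (Fin 3) k →+* Polynomial k) m ≤
        Ideal.span {Polynomial.X} := by
      rw [show m = Ideal.span {X 0, X 1, X 2} from rfl, Ideal.map_span]
      refine Ideal.span_le.2 ?_
      rintro x ⟨y, hy, rfl⟩
      simp only [Set.mem_insert_iff, Set.mem_singleton_iff] at hy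
      rcases hy with rfl | rfl | rfl
      · exact Ideal.subset_span (by simp [hφ])
      · simp [hφ]
      · simp [hφ]
    have h7 : φ (f 3) ∈ Ideal.span {Polynomial.X} ^ 7 := by
      have h := Ideal.mem_map_of_mem (φ : MvPolynomial (Fin 3) k →+* Polynomial k) hmem7
      rw [Ideal.map_pow] at h
      exact Ideal.pow_right_mono hmaple 7 h
    rw [Ideal.span_singleton_pow, Ideal.mem_span_singleton] at h7
    obtain ⟨q, hq⟩ := h7
    have hφf : φ (f 3) = Polynomial.X ^ 6 + Polynomial.C (t ^ 3) * Polynomial.X ^ 13 := by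
      rw [hf3]
      simp only [map_add, map_mul, map_pow, hφD]
      simp [hφ]
      ring
    have hc : Polynomial.coeff (φ (f 3)) 6 = 1 := by
      rw [hφf]
      rw [Polynomial.coeff_add, Polynomial.coeff_C_mul,
        Polynomial.coeff_X_pow, Polynomial.coeff_X_pow]
      norm_num
    have hc0 : Polynomial.coeff (φ (f 3)) 6 = 0 := by
      rw [hq, mul_comm, Polynomial.coeff_mul_X_pow']
      norm_num
    rw [hc] at hc0
    exact one_ne_zero hc0
  exact ⟨⟨hmem, hnot⟩, ⟨3, hnot⟩⟩
end
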